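/- If K ∈ 𝔄_m^r (r ∈ (0,1), m ≥ 2 an integer), then the Hausdorff dimension of K equals s = log m / log(1/r), and moreover 0 < 𝓗^s(K) < ∞, where 𝓗^s denotes s-dimensional Hausdorff measure. -/

import Mathlib

open MeasureTheory

open scoped Classical

/-- The symbolic space metric on `ℕ → Fin m`: `d(x,y) = r ^ (min {k | x k ≠ y k})`
for `x ≠ y`, and `d(x,x) = 0`. -/
noncomputable def symbDist (r : ℝ) {m : ℕ} (x y : ℕ → Fin m) : ℝ :=
  if x = y then 0 else r ^ sInf {k : ℕ | x k ≠ y k}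

/-- `K` (a subset of a metric space) is bilipschitz equivalent to the symbolic
space `Σ_m^r`. -/
def BilipWithSymb {X : Type*} [MetricSpace X] (K : Set X) (m : ℕ) (r : ℝ) : Prop :=
  ∃ f : K → (ℕ → Fin m), Function.Bijective f ∧ ∃ C : ℝ, 1 ≤ C ∧ ∀ x y : K,
    C⁻¹ * dist x y ≤ symbDist r (f x) (f y) ∧ symbDist r (f x) (f y) ≤ C * dist x y

/-- `K ⊆ X` and `K' ⊆ X'` are bilipschitz equivalent (as metric spaces with the
induced metrics). -/
def BilipEquivSets {X Y : Type*} [MetricSpace X] [MetricSpace Y]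
    (K : Set X) (K' : Set Y) : Prop :=
  ∃ f : K → K', Function.Bijective f ∧ ∃ C : ℝ, 1 ≤ C ∧ ∀ x y : K,
    C⁻¹ * dist x y ≤ dist (f x) (f y) ∧ dist (f x) (f y) ≤ C * dist x y

/-- Dust-like graph-directed sets with ratio `r` on a directed graph with `p`
vertices, where `a i j` is the number of edges from `i` to `j`:
nonempty compact sets `K i` with `K i = ⋃_j ⋃_{e : Fin (a i j)} S i j e '' (K j)`,
the union being pairwise disjoint, each `S i j e` a similitude of ratio `r`. -/
structure GraphDirected (X : Type*) [MetricSpace X] (p : ℕ) (r : ℝ) where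
  a : Fin p → Fin p → ℕ
  S : ∀ i j : Fin p, Fin (a i j) → X → X
  sim : ∀ i j e x y, dist (S i j e x) (S i j e y) = r * dist x y
  K : Fin p → Set X
  nonempty : ∀ i, (K i).Nonempty
  compact : ∀ i, IsCompact (K i)
  union : ∀ i, K i = ⋃ j, ⋃ e, S i j e '' K j
  disj : ∀ i : Fin p, ∀ j j' : Fin p, ∀ e : Fin (a i j), ∀ e' : Fin (a i j'),
    (⟨j, e⟩ : Σ j, Fin (a i j)) ≠ ⟨j', e'⟩ →
    Disjoint (S i j e '' K j) (S i j' e' '' K j')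

/-- The family has integer characteristic `m`: there is a positive vector `v`
with `A v = m v`, `A` being the adjacency matrix. -/
def GraphDirected.HasCharacteristic {X : Type*} [MetricSpace X] {p : ℕ} {r : ℝ}
    (G : GraphDirected X p r) (m : ℕ) : Prop :=
  ∃ v : Fin p → ℝ, (∀ i, 0 < v i) ∧ ∀ i, ∑ j, (G.a i j : ℝ) * v j = (m : ℝ) * v i

/-- `K` belongs to the class `𝔄_m^r`: `K = K_1` for some dust-like
graph-directed sets `{K_1, …, K_p}` with ratio `r` and integer characteristic `m`. -/
def MemGDClass {X : Type*} [MetricSpace X] (K : Set X) (r : ℝ) (m : ℕ) : Prop :=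
  ∃ (p : ℕ) (hp : 0 < p) (G : GraphDirected X p r),
    G.HasCharacteristic m ∧ K = G.K ⟨0, hp⟩

namespace GDAux

open scoped ENNReal NNReal

variable {X : Type*} [MetricSpace X] {p : ℕ} {r : ℝ}

@[reducible] def E (G : GraphDirected X p r) : Type _ := Σ i j : Fin p, Fin (G.a i j)

variable (G : GraphDirected X p r)

def emap (e : E G) : X → X := G.S e.1 e.2.1 e.2.2

def tgt (e : E G) : Fin p := e.2.1

def endV : Fin p → List (E G) → Fin p
  | i, [] => i
  | _, e :: l => endV (tgt G e) l

@[simp] lemma endV_nil (i : Fin p) : endV G i [] = i := rfl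

@[simp] lemma endV_cons (i : Fin p) (e : E G) (l : List (E G)) :
    endV G i (e :: l) = endV G (tgt G e) l := rfl

lemma endV_append (u t : List (E G)) (i : Fin p) :
    endV G i (u ++ t) = endV G (endV G i u) t := by
  induction u generalizing i with
  | nil => simp
  | cons e l ih => simp [ih]

def pieceMap : List (E G) → X → X
  | [] => id
  | e :: l => emap G e ∘ pieceMap l

@[simp] lemma pieceMap_nil : pieceMap G [] = id := rfl

@[simp] lemma pieceMap_cons (e : E G) (l : List (E G)) :
    pieceMap G (e :: l) = emap G e ∘ pieceMap G l := rfl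

lemma pieceMap_append (u t : List (E G)) :
    pieceMap G (u ++ t) = pieceMap G u ∘ pieceMap G t := by
  induction u with
  | nil => simp
  | cons e l ih => simp [ih, Function.comp_assoc]

lemma pieceMap_dist (w : List (E G)) (x y : X) :
    dist (pieceMap G w x) (pieceMap G w y) = r ^ w.length * dist x y := by
  induction w with
  | nil => simp
  | cons e l ih =>
    simp only [pieceMap_cons, Function.comp_apply, List.length_cons, emap]
    rw [G.sim, ih, pow_succ]
    ring

/-- Paths of length `n` starting at vertex `i`. -/
def paths (i : Fin p) : ℕ → Finset (List (E G))
  | 0 => {[]}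
  | n + 1 =>
    (paths i n).biUnion fun w =>
      Finset.univ.image fun c : Σ j, Fin (G.a (endV G i w) j) =>
        w ++ [⟨endV G i w, c.1, c.2⟩]

@[simp] lemma mem_paths_zero (i : Fin p) (w : List (E G)) :
    w ∈ paths G i 0 ↔ w = [] := by simp [paths]

lemma mem_paths_succ (i : Fin p) (n : ℕ) (w : List (E G)) :
    w ∈ paths G i (n + 1) ↔ ∃ u ∈ paths G i n,
      ∃ c : Σ j, Fin (G.a (endV G i u) j), w = u ++ [⟨endV G i u, c.1, c.2⟩] := by
  simp [paths, Finset.mem_biUnion, Finset.mem_image, eq_comm]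

lemma length_of_mem_paths {i : Fin p} : ∀ {n : ℕ} {w : List (E G)},
    w ∈ paths G i n → w.length = n := by
  intro n
  induction n with
  | zero => intro w hw; simp_all
  | succ n ih =>
    intro w hw
    rcases (mem_paths_succ G i n w).1 hw with ⟨u, hu, c, rfl⟩
    simp [ih hu]

lemma image_S_subset (i j : Fin p) (e : Fin (G.a i j)) : G.S i j e '' G.K j ⊆ G.K i := by
  conv_rhs => rw [G.union i]
  exact fun x hx => Set.mem_iUnion.2 ⟨j, Set.mem_iUnion.2 ⟨e, hx⟩⟩

lemma subset_K {i : Fin p} : ∀ {n : ℕ} {w : List (E G)}, w ∈ paths G i n →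
    pieceMap G w '' G.K (endV G i w) ⊆ G.K i := by
  intro n
  induction n with
  | zero => intro w hw; rw [mem_paths_zero] at hw; subst hw; simp
  | succ n ih =>
    intro w hw
    rcases (mem_paths_succ G i n w).1 hw with ⟨u, hu, c, rfl⟩
    have h1 : endV G i (u ++ [⟨endV G i u, c.1, c.2⟩]) = c.1 := by
      rw [endV_append]; rfl
    rw [h1, pieceMap_append, Set.image_comp]
    refine subset_trans ?_ (ih hu)
    apply Set.image_mono
    simpa [emap] using image_S_subset G (endV G i u) c.1 c.2

lemma cover (i : Fin p) : ∀ n : ℕ,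
    G.K i ⊆ ⋃ w ∈ paths G i n, pieceMap G w '' G.K (endV G i w) := by
  intro n
  induction n with
  | zero => intro x hx; simpa using hx
  | succ n ih =>
    intro x hx
    rcases Set.mem_iUnion₂.1 (ih hx) with ⟨w, hw, y, hy, rfl⟩
    rw [G.union (endV G i w)] at hy
    rcases Set.mem_iUnion.1 hy with ⟨j, hy⟩
    rcases Set.mem_iUnion.1 hy with ⟨e, z, hz, rfl⟩
    refine Set.mem_iUnion₂.2 ⟨w ++ [⟨endV G i w, j, e⟩], ?_, ?_⟩
    · exact (mem_paths_succ G i n _).2 ⟨w, hw, ⟨j, e⟩, rfl⟩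
    · have h1 : endV G i (w ++ [⟨endV G i w, j, e⟩]) = j := by rw [endV_append]; rfl
      rw [h1, pieceMap_append, Set.image_comp]
      exact ⟨G.S (endV G i w) j e z, ⟨z, hz, rfl⟩, rfl⟩


lemma sum_paths (v : Fin p → ℝ) {m : ℕ}
    (hv : ∀ i, ∑ j, (G.a i j : ℝ) * v j = (m : ℝ) * v i) :
    ∀ (n : ℕ) (i : Fin p), ∑ w ∈ paths G i n, v (endV G i w) = (m : ℝ) ^ n * v i := by
  intro n
  induction n with
  | zero => intro i; simp [paths]
  | succ n ih =>
    intro i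
    rw [show paths G i (n+1) = (paths G i n).biUnion fun w =>
      Finset.univ.image fun c : Σ j, Fin (G.a (endV G i w) j) =>
        w ++ [⟨endV G i w, c.1, c.2⟩] from rfl]
    rw [Finset.sum_biUnion]
    · have hinner : ∀ u ∈ paths G i n,
          (∑ w ∈ Finset.univ.image fun c : Σ j, Fin (G.a (endV G i u) j) =>
            u ++ [⟨endV G i u, c.1, c.2⟩], v (endV G i w)) = (m : ℝ) * v (endV G i u) := by
        intro u hu
        rw [Finset.sum_image]
        · have : ∀ c : Σ j, Fin (G.a (endV G i u) j),
              endV G i (u ++ [⟨endV G i u, c.1, c.2⟩]) = c.1 := by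
            intro c; rw [endV_append]; rfl
          simp only [this]
          rw [← Finset.univ_sigma_univ, Finset.sum_sigma]
          simp [Finset.sum_const, ← hv (endV G i u), mul_comm]
        · intro c _ c' _ h
          have h2 := List.append_cancel_left h
          simp only [List.cons.injEq, and_true] at h2
          injection h2 with h5 h6
      rw [Finset.sum_congr rfl hinner, ← Finset.mul_sum, ih i, pow_succ]
      ring
    · intro u hu u' hu' hne
      unfold Function.onFun
      rw [Finset.disjoint_left]
      intro w hw hw'
      rw [Finset.mem_image] at hw hw'
      rcases hw with ⟨c, _, rfl⟩
      rcases hw' with ⟨c', _, hww⟩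
      have hlen : (u' : List (E G)).length = u.length := by
        rw [length_of_mem_paths G hu, length_of_mem_paths G hu']
      exact hne ((List.append_inj hww.symm hlen.symm).1.symm.symm)


lemma mem_paths_succ' (i : Fin p) (n : ℕ) (w : List (E G)) :
    w ∈ paths G i (n + 1) ↔ ∃ u ∈ paths G i n,
      ∃ e : E G, e.1 = endV G i u ∧ w = u ++ [e] := by
  rw [mem_paths_succ]
  constructor
  · rintro ⟨u, hu, c, rfl⟩
    exact ⟨u, hu, ⟨endV G i u, c.1, c.2⟩, rfl, rfl⟩
  · rintro ⟨u, hu, ⟨i', j, e₂⟩, he, rfl⟩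
    dsimp at he
    subst he
    exact ⟨u, hu, ⟨j, e₂⟩, rfl⟩

lemma mem_paths_add (i : Fin p) (n₁ n₂ : ℕ) (w : List (E G)) :
    w ∈ paths G i (n₁ + n₂) ↔
      ∃ u ∈ paths G i n₁, ∃ t ∈ paths G (endV G i u) n₂, w = u ++ t := by
  induction n₂ generalizing w with
  | zero =>
    simp only [Nat.add_zero, mem_paths_zero]
    constructor
    · intro hw; exact ⟨w, hw, [], by simp, by simp⟩
    · rintro ⟨u, hu, t, ht, rfl⟩; simpa [ht] using hu
  | succ n₂ ih =>
    rw [show n₁ + (n₂ + 1) = (n₁ + n₂) + 1 from rfl, mem_paths_succ']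
    constructor
    · rintro ⟨u₀, hu₀, e, he, rfl⟩
      rcases (ih u₀).1 hu₀ with ⟨u, hu, t, ht, rfl⟩
      refine ⟨u, hu, t ++ [e], ?_, by simp⟩
      rw [mem_paths_succ']
      refine ⟨t, ht, e, ?_, rfl⟩
      rw [he, endV_append]
    · rintro ⟨u, hu, t', ht', rfl⟩
      rw [mem_paths_succ'] at ht'
      rcases ht' with ⟨t, ht, e, he, rfl⟩
      refine ⟨u ++ t, (ih _).2 ⟨u, hu, t, ht, rfl⟩, e, ?_, by simp⟩
      rw [he, endV_append]

lemma paths_append {i : Fin p} {n₁ n₂ : ℕ} {u t : List (E G)} (hu : u ∈ paths G i n₁)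
    (ht : t ∈ paths G (endV G i u) n₂) : u ++ t ∈ paths G i (n₁ + n₂) :=
  (mem_paths_add G i n₁ n₂ _).2 ⟨u, hu, t, ht, rfl⟩

/-- The piece of `X` indexed by a path. -/
def pieceSet (i : Fin p) (w : List (E G)) : Set X :=
  pieceMap G w '' G.K (endV G i w)

lemma pieceSet_nonempty (i : Fin p) (w : List (E G)) : (pieceSet G i w).Nonempty :=
  (G.nonempty _).image _

lemma piece_append_subset {i : Fin p} {n₂ : ℕ} {u t : List (E G)}
    (ht : t ∈ paths G (endV G i u) n₂) :
    pieceSet G i (u ++ t) ⊆ pieceSet G i u := by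
  unfold pieceSet
  rw [endV_append, pieceMap_append, Set.image_comp]
  exact Set.image_mono (subset_K G ht)

lemma single_mem_paths (i' : Fin p) (c : Σ j, Fin (G.a i' j)) :
    ([⟨i', c.1, c.2⟩] : List (E G)) ∈ paths G i' 1 := by
  rw [mem_paths_succ]
  exact ⟨[], by simp, c, by simp⟩

lemma pieceSet_single (i' : Fin p) (c : Σ j, Fin (G.a i' j)) :
    pieceSet G i' [⟨i', c.1, c.2⟩] = G.S i' c.1 c.2 '' G.K c.1 := by
  unfold pieceSet
  have h1 : endV G i' [⟨i', c.1, c.2⟩] = c.1 := rfl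
  rw [h1]
  simp [pieceMap, emap]

lemma pieceSet_append_single (i : Fin p) (u : List (E G)) (c : Σ j, Fin (G.a (endV G i u) j)) :
    pieceSet G i (u ++ [⟨endV G i u, c.1, c.2⟩]) =
      pieceMap G u '' (G.S (endV G i u) c.1 c.2 '' G.K c.1) := by
  unfold pieceSet
  have h1 : endV G i (u ++ [⟨endV G i u, c.1, c.2⟩]) = c.1 := by rw [endV_append]; rfl
  rw [h1, pieceMap_append, Set.image_comp]
  congr 1

/-- The key separation counting lemma: a set of small diameter meets at most one
piece of the corresponding level. -/
lemma count_one {δ : ℝ} (hδ : 0 < δ)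
    (hsep : ∀ (i' : Fin p) (c c' : Σ j, Fin (G.a i' j)), c ≠ c' →
      ∀ x ∈ G.S i' c.1 c.2 '' G.K c.1, ∀ y ∈ G.S i' c'.1 c'.2 '' G.K c'.1, δ ≤ dist x y)
    (hr0 : 0 < r) (hr1 : r < 1) (i : Fin p) :
    ∀ (k : ℕ) (U : Set X), EMetric.diam U < ENNReal.ofReal (r ^ k * δ) →
      ∀ w ∈ paths G i (k + 1), ∀ w' ∈ paths G i (k + 1),
        (pieceSet G i w ∩ U).Nonempty → (pieceSet G i w' ∩ U).Nonempty → w = w' := by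
  intro k
  induction k with
  | zero =>
    intro U hU w hw w' hw' hwU hw'U
    rw [mem_paths_succ] at hw hw'
    rcases hw with ⟨u, hu, c, rfl⟩
    rcases hw' with ⟨u', hu', c', rfl⟩
    rw [mem_paths_zero] at hu hu'
    subst hu; subst hu'
    by_cases hcc : c = c'
    · subst hcc; rfl
    · exfalso
      rcases hwU with ⟨x, hxP, hxU⟩
      rcases hw'U with ⟨y, hyP, hyU⟩
      have hxP' : x ∈ G.S i c.1 c.2 '' G.K c.1 := by
        simpa [pieceSet, pieceMap, emap, tgt] using hxP
      have hyP' : y ∈ G.S i c'.1 c'.2 '' G.K c'.1 := by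
        simpa [pieceSet, pieceMap, emap, tgt] using hyP
      have hd : δ ≤ dist x y := hsep i c c' hcc x hxP' y hyP'
      have h1 : ENNReal.ofReal δ ≤ edist x y := by
        rw [edist_dist]; exact ENNReal.ofReal_le_ofReal hd
      have h2 : edist x y ≤ EMetric.diam U := EMetric.edist_le_diam_of_mem hxU hyU
      have h3 : EMetric.diam U < ENNReal.ofReal δ := by simpa using hU
      exact absurd ((h1.trans h2).trans_lt h3) (lt_irrefl _)
  | succ k ih =>
    intro U hU w hw w' hw' hwU hw'U
    rw [mem_paths_succ] at hw hw'
    rcases hw with ⟨u, hu, c, rfl⟩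
    rcases hw' with ⟨u', hu', c', rfl⟩
    have hUk : EMetric.diam U < ENNReal.ofReal (r ^ k * δ) := by
      refine hU.trans_le (ENNReal.ofReal_le_ofReal ?_)
      have : r ^ (k + 1) ≤ r ^ k := pow_le_pow_of_le_one hr0.le hr1.le (Nat.le_succ k)
      nlinarith
    have huU : (pieceSet G i u ∩ U).Nonempty := by
      rcases hwU with ⟨x, hxP, hxU⟩
      exact ⟨x, piece_append_subset G (single_mem_paths G (endV G i u) c) hxP, hxU⟩
    have hu'U : (pieceSet G i u' ∩ U).Nonempty := by
      rcases hw'U with ⟨x, hxP, hxU⟩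
      exact ⟨x, piece_append_subset G (single_mem_paths G (endV G i u') c') hxP, hxU⟩
    have huu : u = u' := ih U hUk u hu u' hu' huU hu'U
    subst huu
    by_cases hcc : c = c'
    · subst hcc; rfl
    · exfalso
      rcases hwU with ⟨x, hxP, hxU⟩
      rcases hw'U with ⟨y, hyP, hyU⟩
      rw [pieceSet_append_single] at hxP hyP
      rcases hxP with ⟨x₀, hx₀, rfl⟩
      rcases hyP with ⟨y₀, hy₀, rfl⟩
      have hd : δ ≤ dist x₀ y₀ := hsep _ c c' hcc x₀ hx₀ y₀ hy₀
      have hdist : dist (pieceMap G u x₀) (pieceMap G u y₀) = r ^ (k + 1) * dist x₀ y₀ := by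
        rw [pieceMap_dist, length_of_mem_paths G hu]
      have h1 : r ^ (k + 1) * δ ≤ dist (pieceMap G u x₀) (pieceMap G u y₀) := by
        rw [hdist]
        exact mul_le_mul_of_nonneg_left hd (pow_nonneg hr0.le _)
      have h2 : ENNReal.ofReal (r ^ (k + 1) * δ) ≤ edist (pieceMap G u x₀) (pieceMap G u y₀) := by
        rw [edist_dist]; exact ENNReal.ofReal_le_ofReal h1
      have h3 : edist (pieceMap G u x₀) (pieceMap G u y₀) ≤ EMetric.diam U :=
        EMetric.edist_le_diam_of_mem hxU hyU
      exact absurd ((h2.trans h3).trans_lt hU) (lt_irrefl _)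


lemma sum_biUnion_le' {ι α : Type*} [DecidableEq α] {F : Finset ι} {t : ι → Finset α}
    {f : α → ℝ} (hf : ∀ a, 0 ≤ f a) :
    ∑ a ∈ F.biUnion t, f a ≤ ∑ i ∈ F, ∑ a ∈ t i, f a := by
  classical
  induction F using Finset.induction with
  | empty => simp
  | @insert x F' hx ih =>
    rw [Finset.biUnion_insert, Finset.sum_insert hx]
    calc ∑ a ∈ t x ∪ F'.biUnion t, f a
        ≤ (∑ a ∈ t x, f a) + ∑ a ∈ F'.biUnion t, f a := by
          have := Finset.sum_union_inter (s₁ := t x) (s₂ := F'.biUnion t) (f := f)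
          have h2 : 0 ≤ ∑ a ∈ t x ∩ F'.biUnion t, f a := Finset.sum_nonneg fun a _ => hf a
          linarith
      _ ≤ (∑ a ∈ t x, f a) + ∑ i ∈ F', ∑ a ∈ t i, f a := by linarith [ih]

/-- Bound on the total weight of level-`n` pieces meeting a set of small diameter. -/
lemma weight_bound {δ : ℝ} (hδ : 0 < δ)
    (hsep : ∀ (i' : Fin p) (c c' : Σ j, Fin (G.a i' j)), c ≠ c' →
      ∀ x ∈ G.S i' c.1 c.2 '' G.K c.1, ∀ y ∈ G.S i' c'.1 c'.2 '' G.K c'.1, δ ≤ dist x y)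
    (hr0 : 0 < r) (hr1 : r < 1)
    (v : Fin p → ℝ) {m : ℕ} (hv : ∀ i, ∑ j, (G.a i j : ℝ) * v j = (m : ℝ) * v i)
    (hv0 : ∀ j, 0 ≤ v j) (Vmax : ℝ) (hVmax0 : 0 ≤ Vmax) (hVmax : ∀ j, v j ≤ Vmax)
    (i : Fin p) (U : Set X) (k n : ℕ) (hkn : k + 1 ≤ n)
    (hU : EMetric.diam U < ENNReal.ofReal (r ^ k * δ)) :
    ∑ w ∈ (paths G i n).filter (fun w => (pieceSet G i w ∩ U).Nonempty), v (endV G i w) ≤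
      (m : ℝ) ^ (n - k - 1) * Vmax := by
  classical
  set MU := (paths G i n).filter (fun w => (pieceSet G i w ∩ U).Nonempty) with hMU
  have hmVpos : 0 ≤ (m : ℝ) ^ (n - k - 1) * Vmax :=
    mul_nonneg (pow_nonneg (Nat.cast_nonneg m) _) hVmax0
  rcases Finset.eq_empty_or_nonempty MU with hMUe | ⟨w₁, hw₁⟩
  · rw [hMUe]; simpa using hmVpos
  rw [hMU, Finset.mem_filter] at hw₁
  obtain ⟨hw₁p, hw₁U⟩ := hw₁
  set ℓ := n - (k + 1) with hℓ
  have hn : n = (k + 1) + ℓ := by omega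
  rw [hn, mem_paths_add] at hw₁p
  rcases hw₁p with ⟨u, hu, t₁, ht₁, hww⟩
  -- every path in MU extends `u`
  have hext : ∀ w ∈ MU, ∃ t ∈ paths G (endV G i u) ℓ, w = u ++ t := by
    intro w hw
    rw [hMU, Finset.mem_filter] at hw
    obtain ⟨hwp, hwU⟩ := hw
    rw [hn, mem_paths_add] at hwp
    rcases hwp with ⟨u', hu', t, ht, rfl⟩
    have hu'U : (pieceSet G i u' ∩ U).Nonempty := by
      rcases hwU with ⟨x, hxP, hxU⟩
      exact ⟨x, piece_append_subset G ht hxP, hxU⟩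
    have huU : (pieceSet G i u ∩ U).Nonempty := by
      rcases hw₁U with ⟨x, hxP, hxU⟩
      rw [hww] at hxP
      exact ⟨x, piece_append_subset G ht₁ hxP, hxU⟩
    have : u' = u := count_one G hδ hsep hr0 hr1 i k U hU u' hu' u hu hu'U huU
    subst this
    exact ⟨t, ht, rfl⟩
  have hsub : MU ⊆ (paths G (endV G i u) ℓ).image (fun t => u ++ t) := by
    intro w hw
    rcases hext w hw with ⟨t, ht, rfl⟩
    exact Finset.mem_image.2 ⟨t, ht, rfl⟩
  calc ∑ w ∈ MU, v (endV G i w)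
      ≤ ∑ w ∈ (paths G (endV G i u) ℓ).image (fun t => u ++ t), v (endV G i w) :=
        Finset.sum_le_sum_of_subset_of_nonneg hsub (fun w _ _ => hv0 _)
    _ = ∑ t ∈ paths G (endV G i u) ℓ, v (endV G i (u ++ t)) :=
        Finset.sum_image (fun t _ t' _ h => List.append_cancel_left h)
    _ = ∑ t ∈ paths G (endV G i u) ℓ, v (endV G (endV G i u) t) := by
        simp only [endV_append]
    _ = (m : ℝ) ^ ℓ * v (endV G i u) := sum_paths G v hv ℓ (endV G i u)
    _ ≤ (m : ℝ) ^ ℓ * Vmax :=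
        mul_le_mul_of_nonneg_left (hVmax _) (pow_nonneg (Nat.cast_nonneg m) _)
    _ = (m : ℝ) ^ (n - k - 1) * Vmax := by rw [hℓ]; norm_num [Nat.sub_sub]

/-- Disjoint nonempty compact pieces are at positive distance. -/
lemma exists_sep (hr0 : 0 < r) (i' : Fin p) (c c' : Σ j, Fin (G.a i' j)) (hcc : c ≠ c') :
    ∃ d : ℝ, 0 < d ∧ ∀ x ∈ G.S i' c.1 c.2 '' G.K c.1,
      ∀ y ∈ G.S i' c'.1 c'.2 '' G.K c'.1, d ≤ dist x y := by
  have hlip : ∀ (j : Fin p) (e : Fin (G.a i' j)), Continuous (G.S i' j e) := by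
    intro j e
    refine (LipschitzWith.of_dist_le_mul (K := r.toNNReal) fun x y => ?_).continuous
    rw [G.sim]
    exact mul_le_mul_of_nonneg_right (le_of_eq (Real.coe_toNNReal r hr0.le).symm)
      dist_nonneg
  have hcs : IsCompact (G.S i' c.1 c.2 '' G.K c.1) := (G.compact _).image (hlip _ _)
  have hcs' : IsCompact (G.S i' c'.1 c'.2 '' G.K c'.1) := (G.compact _).image (hlip _ _)
  have hdisj : Disjoint (G.S i' c.1 c.2 '' G.K c.1) (G.S i' c'.1 c'.2 '' G.K c'.1) := by
    refine G.disj i' c.1 c'.1 c.2 c'.2 ?_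
    intro h
    apply hcc
    rw [Sigma.eta, Sigma.eta] at h
    exact h
  obtain ⟨d, hd, hdisj2⟩ := hdisj.exists_thickenings hcs hcs'.isClosed
  refine ⟨d, hd, fun x hx y hy => ?_⟩
  by_contra hlt
  push_neg at hlt
  have hy1 : y ∈ Metric.thickening d (G.S i' c.1 c.2 '' G.K c.1) :=
    Metric.mem_thickening_iff.2 ⟨x, hx, by rwa [dist_comm]⟩
  have hy2 : y ∈ Metric.thickening d (G.S i' c'.1 c'.2 '' G.K c'.1) :=
    Metric.self_subset_thickening hd _ hy
  exact Set.disjoint_left.1 hdisj2 hy1 hy2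

/-- If `m ≥ 2` then some vertex has at least two outgoing edges. -/
lemma exists_two_edges {m : ℕ} (hm : 2 ≤ m) (hp : 0 < p)
    (v : Fin p → ℝ) (hvpos : ∀ i, 0 < v i)
    (hv : ∀ i, ∑ j, (G.a i j : ℝ) * v j = (m : ℝ) * v i) :
    ∃ (i' : Fin p) (c c' : Σ j, Fin (G.a i' j)), c ≠ c' := by
  by_contra hcon
  push_neg at hcon
  obtain ⟨i₀, _, hmax⟩ := Finset.exists_max_image Finset.univ v ⟨⟨0, hp⟩, Finset.mem_univ _⟩
  have hcard : ∀ i' : Fin p, (∑ j, G.a i' j : ℕ) ≤ 1 := by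
    intro i'
    have : Fintype.card (Σ j, Fin (G.a i' j)) ≤ 1 := by
      rw [Fintype.card_le_one_iff]
      intro a b; exact hcon i' a b
    simpa [Fintype.card_sigma] using this
  have h1 : (m : ℝ) * v i₀ ≤ v i₀ := by
    rw [← hv i₀]
    calc ∑ j, (G.a i₀ j : ℝ) * v j ≤ ∑ j, (G.a i₀ j : ℝ) * v i₀ := by
          refine Finset.sum_le_sum fun j _ => ?_
          exact mul_le_mul_of_nonneg_left (hmax j (Finset.mem_univ _)) (Nat.cast_nonneg _)
      _ = (∑ j, (G.a i₀ j : ℝ)) * v i₀ := by rw [Finset.sum_mul]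
      _ ≤ 1 * v i₀ := by
          refine mul_le_mul_of_nonneg_right ?_ (hvpos i₀).le
          have := hcard i₀
          push_cast [← Nat.cast_sum]
          exact_mod_cast this
      _ = v i₀ := one_mul _
  have h2 : (2 : ℝ) ≤ (m : ℝ) := by exact_mod_cast hm
  nlinarith [hvpos i₀]


/-- The core finite-cover counting bound. -/
lemma core_finite {δ : ℝ} (hδ : 0 < δ)
    (hsep : ∀ (i' : Fin p) (c c' : Σ j, Fin (G.a i' j)), c ≠ c' →
      ∀ x ∈ G.S i' c.1 c.2 '' G.K c.1, ∀ y ∈ G.S i' c'.1 c'.2 '' G.K c'.1, δ ≤ dist x y)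
    (hr0 : 0 < r) (hr1 : r < 1)
    (v : Fin p → ℝ) {m : ℕ} (hm : 2 ≤ m)
    (hv : ∀ i, ∑ j, (G.a i j : ℝ) * v j = (m : ℝ) * v i)
    (hvpos : ∀ j, 0 < v j) (Vmax : ℝ) (hVmaxpos : 0 < Vmax) (hVmax : ∀ j, v j ≤ Vmax)
    {s : ℝ} (hs0 : 0 < s) (hrs : ∀ k : ℕ, (r ^ k) ^ s = ((m : ℝ) ^ k)⁻¹)
    (i0 : Fin p) (F : Finset ℕ) (O : ℕ → Set X)
    (hfin : ∀ n ∈ F, EMetric.diam (O n) ≠ ⊤)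
    (hcov : G.K i0 ⊆ ⋃ n ∈ F, O n) :
    v i0 * δ ^ s / (2 * Vmax) ≤ ∑ n ∈ F, ((EMetric.diam (O n)).toReal) ^ s := by
  classical
  set d : ℕ → ℝ := fun n => (EMetric.diam (O n)).toReal with hd
  have hd0 : ∀ n, 0 ≤ d n := fun n => ENNReal.toReal_nonneg
  have hm1 : (1 : ℝ) < m := by exact_mod_cast hm
  have hkex : ∀ n, 0 < d n → d n < δ → ∃ k : ℕ, d n < r ^ k * δ ∧ r ^ (k + 1) * δ ≤ d n := by
    intro n h0 h1
    have hPex : ∃ k, r ^ k * δ ≤ d n := by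
      obtain ⟨k, hk⟩ := exists_pow_lt_of_lt_one (div_pos h0 hδ) hr1
      exact ⟨k, ((lt_div_iff₀ hδ).1 hk).le⟩
    set k1 := Nat.find hPex with hk1def
    have hk1 : r ^ k1 * δ ≤ d n := Nat.find_spec hPex
    have hk10 : k1 ≠ 0 := by
      intro h
      rw [h] at hk1
      simp only [pow_zero, one_mul] at hk1
      linarith
    refine ⟨k1 - 1, ?_, ?_⟩
    · have hmin := Nat.find_min hPex (m := k1 - 1) (by omega)
      push_neg at hmin
      exact hmin
    · have h2 : k1 - 1 + 1 = k1 := by omega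
      rw [h2]; exact hk1
  set kf : ℕ → ℕ := fun n => if h : 0 < d n ∧ d n < δ then (hkex n h.1 h.2).choose else 0
    with hkf
  have hkf1 : ∀ n, 0 < d n → d n < δ →
      d n < r ^ kf n * δ ∧ r ^ (kf n + 1) * δ ≤ d n := by
    intro n h0 h1
    have : kf n = (hkex n h0 h1).choose := by
      rw [hkf]
      dsimp only
      rw [dif_pos (show 0 < d n ∧ d n < δ from ⟨h0, h1⟩)]
    rw [this]
    exact (hkex n h0 h1).choose_spec
  obtain ⟨N₂, hN₂⟩ := pow_unbounded_of_one_lt (2 * F.card * Vmax / v i0) hm1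
  set N := max (F.sup kf + 1) N₂ with hN
  have hN1 : 1 ≤ N := le_trans (by omega) (le_max_left _ _)
  have hNk : ∀ n ∈ F, kf n + 1 ≤ N := by
    intro n hn
    have := Finset.le_sup (f := kf) hn
    have h2 : kf n + 1 ≤ F.sup kf + 1 := by omega
    exact le_trans h2 (le_max_left _ _)
  have hNbig : 2 * F.card * Vmax / v i0 < (m : ℝ) ^ N :=
    lt_of_lt_of_le hN₂ (pow_le_pow_right₀ hm1.le (le_max_right _ _))
  set MU : ℕ → Finset (List (E G)) :=
    fun n => (paths G i0 N).filter (fun w => (pieceSet G i0 w ∩ O n).Nonempty) with hMUdef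
  set W : ℕ → ℝ := fun n => ∑ w ∈ MU n, v (endV G i0 w) with hW
  have htotal : (m : ℝ) ^ N * v i0 ≤ ∑ n ∈ F, W n := by
    have hbU : paths G i0 N ⊆ F.biUnion MU := by
      intro w hw
      obtain ⟨x, hx⟩ := pieceSet_nonempty G i0 w
      have hxK : x ∈ G.K i0 := subset_K G hw hx
      obtain ⟨n, hn, hxO⟩ := Set.mem_iUnion₂.1 (hcov hxK)
      exact Finset.mem_biUnion.2 ⟨n, hn, Finset.mem_filter.2 ⟨hw, ⟨x, hx, hxO⟩⟩⟩
    calc (m : ℝ) ^ N * v i0 = ∑ w ∈ paths G i0 N, v (endV G i0 w) :=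
          (sum_paths G v hv N i0).symm
      _ ≤ ∑ w ∈ F.biUnion MU, v (endV G i0 w) :=
          Finset.sum_le_sum_of_subset_of_nonneg hbU (fun _ _ _ => (hvpos _).le)
      _ ≤ ∑ n ∈ F, W n := sum_biUnion_le' (fun w => (hvpos _).le)
  have hWb : ∀ n ∈ F, d n ≠ 0 → W n ≤ (m : ℝ) ^ N * Vmax * ((d n / δ) ^ s) := by
    intro n hn hdn
    have hdpos : 0 < d n := lt_of_le_of_ne (hd0 n) (Ne.symm hdn)
    by_cases hcase : d n < δ
    · obtain ⟨hlt, hge⟩ := hkf1 n hdpos hcase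
      have hdiam : EMetric.diam (O n) < ENNReal.ofReal (r ^ kf n * δ) := by
        rw [← ENNReal.ofReal_toReal (hfin n hn)]
        exact (ENNReal.ofReal_lt_ofReal_iff (by positivity)).2 hlt
      have hWn := weight_bound G hδ hsep hr0 hr1 v hv (fun j => (hvpos j).le)
        Vmax hVmaxpos.le hVmax i0 (O n) (kf n) N (hNk n hn) hdiam
      refine le_trans hWn ?_
      have hk1N : kf n + 1 ≤ N := hNk n hn
      have hsplit : (m : ℝ) ^ (N - kf n - 1) * (m : ℝ) ^ (kf n + 1) = (m : ℝ) ^ N := by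
        rw [← pow_add]; congr 1; omega
      have hrpow : ((m : ℝ) ^ (kf n + 1))⁻¹ ≤ (d n / δ) ^ s := by
        rw [← hrs (kf n + 1)]
        refine Real.rpow_le_rpow (pow_nonneg hr0.le _) ?_ hs0.le
        rw [le_div_iff₀ hδ]; exact hge
      have hmpow : (0:ℝ) < (m : ℝ) ^ (kf n + 1) := by positivity
      calc (m : ℝ) ^ (N - kf n - 1) * Vmax
          = (m : ℝ) ^ N * ((m : ℝ) ^ (kf n + 1))⁻¹ * Vmax := by
            rw [← hsplit]; field_simp
        _ ≤ (m : ℝ) ^ N * ((d n / δ) ^ s) * Vmax := by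
            refine mul_le_mul_of_nonneg_right
              (mul_le_mul_of_nonneg_left hrpow (by positivity)) hVmaxpos.le
        _ = (m : ℝ) ^ N * Vmax * ((d n / δ) ^ s) := by ring
    · push_neg at hcase
      have hW1 : W n ≤ (m : ℝ) ^ N * v i0 := by
        rw [hW]
        calc ∑ w ∈ MU n, v (endV G i0 w)
            ≤ ∑ w ∈ paths G i0 N, v (endV G i0 w) :=
              Finset.sum_le_sum_of_subset_of_nonneg (Finset.filter_subset _ _)
                (fun _ _ _ => (hvpos _).le)
          _ = (m : ℝ) ^ N * v i0 := sum_paths G v hv N i0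
      have hone : (1 : ℝ) ≤ (d n / δ) ^ s := by
        rw [show (1 : ℝ) = 1 ^ s from (Real.one_rpow s).symm]
        exact Real.rpow_le_rpow zero_le_one ((one_le_div hδ).2 hcase) hs0.le
      calc W n ≤ (m : ℝ) ^ N * v i0 := hW1
        _ ≤ (m : ℝ) ^ N * Vmax := mul_le_mul_of_nonneg_left (hVmax i0) (by positivity)
        _ ≤ (m : ℝ) ^ N * Vmax * ((d n / δ) ^ s) :=
            le_mul_of_one_le_right (by positivity) hone
  have hWzero : ∀ n ∈ F, d n = 0 → W n ≤ Vmax := by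
    intro n hn hdn
    have h0 : EMetric.diam (O n) = 0 := by
      rcases (ENNReal.toReal_eq_zero_iff _).1 hdn with h | h
      · exact h
      · exact absurd h (hfin n hn)
    have hdiam : EMetric.diam (O n) < ENNReal.ofReal (r ^ (N - 1) * δ) := by
      rw [h0]
      exact ENNReal.ofReal_pos.2 (by positivity)
    have hk1N : N - 1 + 1 ≤ N := by omega
    have hWn := weight_bound G hδ hsep hr0 hr1 v hv (fun j => (hvpos j).le)
      Vmax hVmaxpos.le hVmax i0 (O n) (N - 1) N hk1N hdiam
    have hz : N - (N - 1) - 1 = 0 := by omega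
    rw [hz, pow_zero, one_mul] at hWn
    exact hWn
  have hsplitF : ∑ n ∈ F, W n =
      ∑ n ∈ F.filter (fun n => d n = 0), W n +
        ∑ n ∈ F.filter (fun n => ¬d n = 0), W n :=
    (Finset.sum_filter_add_sum_filter_not F _ W).symm
  have hF0 : ∑ n ∈ F.filter (fun n => d n = 0), W n ≤ (F.card : ℝ) * Vmax := by
    calc ∑ n ∈ F.filter (fun n => d n = 0), W n
        ≤ ∑ _n ∈ F.filter (fun n => d n = 0), Vmax := by
          refine Finset.sum_le_sum fun n hn => ?_
          rw [Finset.mem_filter] at hn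
          exact hWzero n hn.1 hn.2
      _ = ((F.filter (fun n => d n = 0)).card : ℝ) * Vmax := by
          rw [Finset.sum_const, nsmul_eq_mul]
      _ ≤ (F.card : ℝ) * Vmax := by
          refine mul_le_mul_of_nonneg_right ?_ hVmaxpos.le
          exact_mod_cast Finset.card_le_card (Finset.filter_subset _ _)
  have hF1 : ∑ n ∈ F.filter (fun n => ¬d n = 0), W n ≤
      (m : ℝ) ^ N * Vmax * ∑ n ∈ F, (d n / δ) ^ s := by
    calc ∑ n ∈ F.filter (fun n => ¬d n = 0), W n
        ≤ ∑ n ∈ F.filter (fun n => ¬d n = 0), (m : ℝ) ^ N * Vmax * ((d n / δ) ^ s) := by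
          refine Finset.sum_le_sum fun n hn => ?_
          rw [Finset.mem_filter] at hn
          exact hWb n hn.1 hn.2
      _ ≤ ∑ n ∈ F, (m : ℝ) ^ N * Vmax * ((d n / δ) ^ s) := by
          refine Finset.sum_le_sum_of_subset_of_nonneg (Finset.filter_subset _ _)
            fun n _ _ => ?_
          have : (0:ℝ) ≤ (d n / δ) ^ s := Real.rpow_nonneg (by positivity) s
          positivity
      _ = (m : ℝ) ^ N * Vmax * ∑ n ∈ F, (d n / δ) ^ s := by
          rw [Finset.mul_sum]
  have hcard : (F.card : ℝ) * Vmax ≤ (m : ℝ) ^ N * v i0 / 2 := by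
    rw [div_lt_iff₀ (hvpos i0)] at hNbig
    nlinarith [hvpos i0]
  have hmN : (0 : ℝ) < (m : ℝ) ^ N := by positivity
  have hmain : (m : ℝ) ^ N * (v i0 / 2) ≤ (m : ℝ) ^ N * (Vmax * ∑ n ∈ F, (d n / δ) ^ s) := by
    nlinarith [htotal, hsplitF, hF0, hF1]
  have h6 : v i0 / 2 ≤ Vmax * ∑ n ∈ F, (d n / δ) ^ s :=
    le_of_mul_le_mul_left hmain hmN
  have hdiv : ∑ n ∈ F, (d n / δ) ^ s = (∑ n ∈ F, (d n) ^ s) / δ ^ s := by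
    rw [Finset.sum_div]
    exact Finset.sum_congr rfl fun n _ => Real.div_rpow (hd0 n) hδ.le s
  have hδs : (0 : ℝ) < δ ^ s := Real.rpow_pos_of_pos hδ s
  rw [hdiv, ← mul_div_assoc] at h6
  rw [div_le_iff₀ (by positivity)]
  rw [div_le_div_iff₀ (by norm_num) hδs] at h6
  linarith


/-- Lower bound for the Hausdorff measure. -/
lemma lower_bound [MeasurableSpace X] [BorelSpace X] {δ : ℝ} (hδ : 0 < δ)
    (hsep : ∀ (i' : Fin p) (c c' : Σ j, Fin (G.a i' j)), c ≠ c' →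
      ∀ x ∈ G.S i' c.1 c.2 '' G.K c.1, ∀ y ∈ G.S i' c'.1 c'.2 '' G.K c'.1, δ ≤ dist x y)
    (hr0 : 0 < r) (hr1 : r < 1)
    (v : Fin p → ℝ) {m : ℕ} (hm : 2 ≤ m)
    (hv : ∀ i, ∑ j, (G.a i j : ℝ) * v j = (m : ℝ) * v i)
    (hvpos : ∀ j, 0 < v j) (Vmax : ℝ) (hVmaxpos : 0 < Vmax) (hVmax : ∀ j, v j ≤ Vmax)
    {s : ℝ} (hs0 : 0 < s) (hrs : ∀ k : ℕ, (r ^ k) ^ s = ((m : ℝ) ^ k)⁻¹)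
    (i0 : Fin p) :
    ENNReal.ofReal (v i0 * δ ^ s / (2 * Vmax)) ≤ μH[s] (G.K i0) := by
  classical
  rw [MeasureTheory.Measure.hausdorffMeasure_apply]
  refine le_iSup₂_of_le 1 one_pos ?_
  refine le_iInf fun t => le_iInf fun hcov' => le_iInf fun hdiam => ?_
  refine ENNReal.le_of_forall_pos_le_add fun ε hε _ => ?_
  set d0 : ℕ → ℝ := fun n => (EMetric.diam (t n)).toReal with hd0def
  have hd00 : ∀ n, 0 ≤ d0 n := fun n => ENNReal.toReal_nonneg
  have htfin : ∀ n, EMetric.diam (t n) ≠ ⊤ :=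
    fun n => ((hdiam n).trans_lt ENNReal.one_lt_top).ne
  set σ : ℕ → ℝ := fun n => (ε : ℝ) * (1 / 2) ^ (n + 1) with hσdef
  have hσpos : ∀ n, 0 < σ n := fun n => by
    have : (0:ℝ) < (ε : ℝ) := hε
    positivity
  -- choose thickening radii
  have hch : ∀ n, ∃ e : ℝ, 0 < e ∧ (d0 n + 2 * e) ^ s ≤ d0 n ^ s + σ n := by
    intro n
    have hcont : ContinuousAt (fun x : ℝ => x ^ s) (d0 n) :=
      Real.continuousAt_rpow_const _ _ (Or.inr hs0.le)
    have h2 : Filter.Tendsto (fun e : ℝ => d0 n + 2 * e) (nhds 0) (nhds (d0 n)) := by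
      have hc : Continuous (fun e : ℝ => d0 n + 2 * e) := by continuity
      have := hc.tendsto 0
      simpa using this
    have h3 : Filter.Tendsto (fun e : ℝ => (d0 n + 2 * e) ^ s) (nhds 0) (nhds (d0 n ^ s)) :=
      hcont.tendsto.comp h2
    have h4 : ∀ᶠ e in nhds (0:ℝ), (d0 n + 2 * e) ^ s < d0 n ^ s + σ n :=
      h3.eventually_lt_const (lt_add_of_pos_right _ (hσpos n))
    have h5 : ∀ᶠ e in nhdsWithin (0:ℝ) (Set.Ioi 0),
        (d0 n + 2 * e) ^ s < d0 n ^ s + σ n := h4.filter_mono nhdsWithin_le_nhds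
    obtain ⟨e, he1, he2⟩ := (h5.and self_mem_nhdsWithin).exists
    exact ⟨e, he2, he1.le⟩
  choose ef hefpos hefb using hch
  set O : ℕ → Set X := fun n => if (t n).Nonempty then Metric.thickening (ef n) (t n) else ∅
    with hOdef
  have hOopen : ∀ n, IsOpen (O n) := by
    intro n; rw [hOdef]; dsimp only
    split_ifs
    · exact Metric.isOpen_thickening
    · exact isOpen_empty
  have htO : ∀ n, t n ⊆ O n := by
    intro n; rw [hOdef]; dsimp only
    split_ifs with h
    · exact Metric.self_subset_thickening (hefpos n) _
    · rw [Set.not_nonempty_iff_eq_empty] at h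
      rw [h]
  have hOdiam : ∀ n, EMetric.diam (O n) ≤ EMetric.diam (t n) + 2 * ENNReal.ofReal (ef n) := by
    intro n; rw [hOdef]; dsimp only
    split_ifs
    · have h1 : Metric.thickening (ef n) (t n) =
          Metric.thickening (((ef n).toNNReal : ℝ)) (t n) := by
        rw [Real.coe_toNNReal _ (hefpos n).le]
      rw [h1]
      have := Metric.ediam_thickening_le (s := t n) (ef n).toNNReal
      simpa [ENNReal.ofReal, EMetric.diam] using this
    · simp [EMetric.diam]
  have hOfin : ∀ n, EMetric.diam (O n) ≠ ⊤ := by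
    intro n
    refine ((hOdiam n).trans_lt ?_).ne
    have h1 : EMetric.diam (t n) < ⊤ := (hdiam n).trans_lt ENNReal.one_lt_top
    have h2 : (2 : ℝ≥0∞) * ENNReal.ofReal (ef n) < ⊤ := by
      refine ENNReal.mul_lt_top (by norm_num) ENNReal.ofReal_lt_top
    exact ENNReal.add_lt_top.2 ⟨h1, h2⟩
  have hcovO : G.K i0 ⊆ ⋃ n, O n := hcov'.trans (Set.iUnion_mono htO)
  obtain ⟨F, hF⟩ := (G.compact i0).elim_finite_subcover O hOopen hcovO
  have hcore := core_finite G hδ hsep hr0 hr1 v hm hv hvpos Vmax hVmaxpos hVmax hs0 hrs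
    i0 F O (fun n _ => hOfin n) hF
  -- real-side estimate for each n
  have hdOn : ∀ n, (EMetric.diam (O n)).toReal ^ s ≤ d0 n ^ s + σ n := by
    intro n
    have h1 : (EMetric.diam (O n)).toReal ≤ d0 n + 2 * ef n := by
      have h2 := hOdiam n
      have h3 : (EMetric.diam (t n) + 2 * ENNReal.ofReal (ef n)).toReal =
          d0 n + 2 * ef n := by
        rw [ENNReal.toReal_add (htfin n) (by
          exact (ENNReal.mul_lt_top (by norm_num) ENNReal.ofReal_lt_top).ne)]
        rw [ENNReal.toReal_mul, ENNReal.toReal_ofReal (hefpos n).le]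
        norm_num; rfl
      calc (EMetric.diam (O n)).toReal
          ≤ (EMetric.diam (t n) + 2 * ENNReal.ofReal (ef n)).toReal := by
            refine ENNReal.toReal_mono ?_ h2
            exact (ENNReal.add_lt_top.2 ⟨(hdiam n).trans_lt ENNReal.one_lt_top,
              ENNReal.mul_lt_top (by norm_num) ENNReal.ofReal_lt_top⟩).ne
        _ = d0 n + 2 * ef n := h3
    calc (EMetric.diam (O n)).toReal ^ s ≤ (d0 n + 2 * ef n) ^ s :=
          Real.rpow_le_rpow ENNReal.toReal_nonneg h1 hs0.le
      _ ≤ d0 n ^ s + σ n := hefb n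
  -- sum of the perturbations
  have hσsum : ∑ n ∈ F, σ n ≤ (ε : ℝ) := by
    have hsub : F ⊆ Finset.range (F.sup id + 1) := by
      intro n hn
      rw [Finset.mem_range]
      have h9 : n ≤ F.sup id := Finset.le_sup (f := id) hn
      omega
    calc ∑ n ∈ F, σ n ≤ ∑ n ∈ Finset.range (F.sup id + 1), σ n :=
          Finset.sum_le_sum_of_subset_of_nonneg hsub (fun n _ _ => (hσpos n).le)
      _ = (ε : ℝ) * ((1/2) * ∑ n ∈ Finset.range (F.sup id + 1), (1/2 : ℝ) ^ n) := by
          rw [hσdef, ← Finset.mul_sum]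
          congr 1
          rw [Finset.mul_sum]
          exact Finset.sum_congr rfl fun n _ => by ring
      _ ≤ (ε : ℝ) * ((1/2) * 2) := by
          refine mul_le_mul_of_nonneg_left ?_ (by positivity)
          refine mul_le_mul_of_nonneg_left ?_ (by norm_num)
          exact sum_geometric_two_le _
      _ = (ε : ℝ) := by ring
  -- assemble in ℝ≥0∞
  have hreal : v i0 * δ ^ s / (2 * Vmax) ≤ (∑ n ∈ F, d0 n ^ s) + (ε : ℝ) := by
    calc v i0 * δ ^ s / (2 * Vmax) ≤ ∑ n ∈ F, ((EMetric.diam (O n)).toReal) ^ s := hcore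
      _ ≤ ∑ n ∈ F, (d0 n ^ s + σ n) := Finset.sum_le_sum fun n _ => hdOn n
      _ = (∑ n ∈ F, d0 n ^ s) + ∑ n ∈ F, σ n := Finset.sum_add_distrib
      _ ≤ (∑ n ∈ F, d0 n ^ s) + (ε : ℝ) := by linarith
  calc ENNReal.ofReal (v i0 * δ ^ s / (2 * Vmax))
      ≤ ENNReal.ofReal ((∑ n ∈ F, d0 n ^ s) + (ε : ℝ)) := ENNReal.ofReal_le_ofReal hreal
    _ ≤ ENNReal.ofReal (∑ n ∈ F, d0 n ^ s) + ENNReal.ofReal (ε : ℝ) :=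
        ENNReal.ofReal_add_le
    _ = (∑ n ∈ F, ENNReal.ofReal (d0 n ^ s)) + (ε : ℝ≥0∞) := by
        rw [ENNReal.ofReal_sum_of_nonneg (fun n _ => Real.rpow_nonneg (hd00 n) s),
          ENNReal.ofReal_coe_nnreal]
    _ ≤ (∑ n ∈ F, ⨆ _ : (t n).Nonempty, EMetric.diam (t n) ^ s) + (ε : ℝ≥0∞) := by
        refine add_le_add_left (Finset.sum_le_sum fun n _ => ?_) _
        by_cases hne : (t n).Nonempty
        · rw [iSup_pos hne]
          rw [← ENNReal.ofReal_rpow_of_nonneg (hd00 n) hs0.le]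
          rw [ENNReal.ofReal_toReal (htfin n)]
        · have h1 : t n = ∅ := Set.not_nonempty_iff_eq_empty.1 hne
          have h2 : d0 n = 0 := by rw [hd0def]; simp [h1, EMetric.diam]
          rw [h2, Real.zero_rpow hs0.ne']
          simp
    _ ≤ (∑' n, ⨆ _ : (t n).Nonempty, EMetric.diam (t n) ^ s) + (ε : ℝ≥0∞) :=
        add_le_add_left (ENNReal.sum_le_tsum F) _


/-- Upper bound for the Hausdorff measure. -/
lemma upper_bound [CompactSpace X] [MeasurableSpace X] [BorelSpace X]
    (hr0 : 0 < r) (hr1 : r < 1)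
    (v : Fin p → ℝ) {m : ℕ} (hm : 2 ≤ m)
    (hv : ∀ i, ∑ j, (G.a i j : ℝ) * v j = (m : ℝ) * v i)
    (hvpos : ∀ j, 0 < v j) (Vmin : ℝ) (hVminpos : 0 < Vmin) (hVmin : ∀ j, Vmin ≤ v j)
    {s : ℝ} (hs0 : 0 < s) (hrs : ∀ k : ℕ, (r ^ k) ^ s = ((m : ℝ) ^ k)⁻¹) (i0 : Fin p) :
    μH[s] (G.K i0) ≤
      ENNReal.ofReal (v i0 / Vmin * Metric.diam (Set.univ : Set X) ^ s) := by
  classical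
  set D := Metric.diam (Set.univ : Set X) with hD
  have hD0 : 0 ≤ D := Metric.diam_nonneg
  have hm0 : (0 : ℝ) < m := by
    have : (2:ℝ) ≤ m := by exact_mod_cast hm
    linarith
  have htend : Filter.Tendsto (fun n : ℕ => ENNReal.ofReal (r ^ n * D))
      Filter.atTop (nhds 0) := by
    have h1 : Filter.Tendsto (fun n : ℕ => r ^ n * D) Filter.atTop (nhds (0 * D)) :=
      (tendsto_pow_atTop_nhds_zero_of_lt_one hr0.le hr1).mul_const D
    rw [zero_mul] at h1
    have h2 := ENNReal.tendsto_ofReal h1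
    simpa using h2
  have hdiamp : ∀ (n : ℕ) (w : List (E G)), w ∈ paths G i0 n →
      EMetric.diam (pieceSet G i0 w) ≤ ENNReal.ofReal (r ^ n * D) := by
    intro n w hw
    refine EMetric.diam_le ?_
    rintro x ⟨a, _, rfl⟩ y ⟨b, _, rfl⟩
    rw [edist_dist, pieceMap_dist, length_of_mem_paths G hw]
    refine ENNReal.ofReal_le_ofReal ?_
    have hab : dist a b ≤ D :=
      Metric.dist_le_diam_of_mem isCompact_univ.isBounded trivial trivial
    exact mul_le_mul_of_nonneg_left hab (pow_nonneg hr0.le n)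
  have hle := MeasureTheory.Measure.hausdorffMeasure_le_liminf_sum s (G.K i0)
    (fun n => ENNReal.ofReal (r ^ n * D)) htend
    (fun n (w : { w // w ∈ paths G i0 n }) => pieceSet G i0 w.1)
    (Filter.Eventually.of_forall fun n w => hdiamp n w.1 w.2)
    (Filter.Eventually.of_forall fun n => by
      intro x hx
      rcases Set.mem_iUnion₂.1 (cover G i0 n hx) with ⟨w, hw, hxw⟩
      exact Set.mem_iUnion.2 ⟨⟨w, hw⟩, hxw⟩)
  refine hle.trans ?_
  set B := ENNReal.ofReal (v i0 / Vmin * D ^ s) with hB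
  have hterm : ∀ n : ℕ,
      (∑ w : { w // w ∈ paths G i0 n }, EMetric.diam (pieceSet G i0 w.1) ^ s) ≤ B := by
    intro n
    have hcard : ((paths G i0 n).card : ℝ) ≤ (m : ℝ) ^ n * v i0 / Vmin := by
      rw [le_div_iff₀ hVminpos]
      calc ((paths G i0 n).card : ℝ) * Vmin = ∑ _w ∈ paths G i0 n, Vmin := by
            rw [Finset.sum_const, nsmul_eq_mul]
        _ ≤ ∑ w ∈ paths G i0 n, v (endV G i0 w) :=
            Finset.sum_le_sum fun w _ => hVmin _
        _ = (m : ℝ) ^ n * v i0 := sum_paths G v hv n i0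
    calc (∑ w : { w // w ∈ paths G i0 n }, EMetric.diam (pieceSet G i0 w.1) ^ s)
        ≤ ∑ _w : { w // w ∈ paths G i0 n }, ENNReal.ofReal ((r ^ n * D) ^ s) := by
          refine Finset.sum_le_sum fun w _ => ?_
          rw [← ENNReal.ofReal_rpow_of_nonneg (by positivity) hs0.le]
          exact ENNReal.rpow_le_rpow (hdiamp n w.1 w.2) hs0.le
      _ = ((paths G i0 n).card : ℝ≥0∞) * ENNReal.ofReal ((r ^ n * D) ^ s) := by
          rw [Finset.sum_const, nsmul_eq_mul]
          congr 1
          simp [Fintype.card_coe]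
      _ ≤ ENNReal.ofReal ((m : ℝ) ^ n * v i0 / Vmin) * ENNReal.ofReal ((r ^ n * D) ^ s) := by
          refine mul_le_mul_left ?_ _
          rw [← ENNReal.ofReal_natCast]
          exact ENNReal.ofReal_le_ofReal hcard
      _ = B := by
          rw [← ENNReal.ofReal_mul (by
            have h8 := hvpos i0
            positivity)]
          rw [hB]
          congr 1
          rw [Real.mul_rpow (pow_nonneg hr0.le n) hD0, hrs n]
          field_simp
  calc Filter.liminf
        (fun n => ∑ w : { w // w ∈ paths G i0 n }, EMetric.diam (pieceSet G i0 w.1) ^ s)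
        Filter.atTop
      ≤ Filter.liminf (fun _ : ℕ => B) Filter.atTop :=
        Filter.liminf_le_liminf (Filter.Eventually.of_forall hterm)
    _ = B := Filter.liminf_const B

end GDAux

open scoped ENNReal NNReal

/-- If `K ∈ 𝔄_m^r` (`r ∈ (0,1)`, `m ≥ 2` an integer), then the Hausdorff
dimension of `K` equals `s = log m / log (1/r)`, and `0 < 𝓗^s(K) < ∞`. -/
theorem gdClass_dimH_and_measure
    {X : Type*} [MetricSpace X] [CompactSpace X] [MeasurableSpace X] [BorelSpace X]
    {r : ℝ} (hr : r ∈ Set.Ioo (0 : ℝ) 1) {m : ℕ} (hm : 2 ≤ m)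
    {K : Set X} (hK : MemGDClass K r m)
    (s : ℝ) (hs : s = Real.log m / Real.log (1 / r)) :
    dimH K = ENNReal.ofReal s ∧ 0 < μH[s] K ∧ μH[s] K < ⊤ := by
  classical
  obtain ⟨p, hp, G, hchar, hKeq⟩ := hK
  obtain ⟨v, hvpos, hv⟩ := hchar
  obtain ⟨hr0, hr1⟩ := hr
  subst hKeq
  set i0 : Fin p := ⟨0, hp⟩
  have hm1 : (1 : ℝ) < m := by
    have : (2:ℝ) ≤ m := by exact_mod_cast hm
    linarith
  have hs0 : 0 < s := by
    rw [hs]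
    refine div_pos (Real.log_pos hm1) (Real.log_pos ?_)
    rw [lt_div_iff₀ hr0, one_mul]
    exact hr1
  have hrs1 : r ^ s = ((m : ℝ))⁻¹ := by
    rw [hs, Real.rpow_def_of_pos hr0]
    have hlr : Real.log r ≠ 0 := (Real.log_neg hr0 hr1).ne
    have hlog : Real.log m / Real.log (1 / r) * Real.log r = -Real.log m := by
      rw [one_div, Real.log_inv, div_neg, neg_mul, div_mul_cancel₀ _ hlr]
    rw [mul_comm (Real.log r), hlog, Real.exp_neg, Real.exp_log (by linarith : (0:ℝ) < m)]
  have hrs : ∀ k : ℕ, ((r : ℝ) ^ k) ^ s = ((m : ℝ) ^ k)⁻¹ := by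
    intro k
    have h1 : ((r : ℝ) ^ k) ^ s = (r ^ s) ^ k := by
      rw [← Real.rpow_natCast (r ^ s) k, ← Real.rpow_natCast r k,
        ← Real.rpow_mul hr0.le, ← Real.rpow_mul hr0.le, mul_comm]
    rw [h1, hrs1, inv_pow]
  obtain ⟨imax, _, hmax⟩ := Finset.exists_max_image Finset.univ v ⟨i0, Finset.mem_univ _⟩
  obtain ⟨imin, _, hmin⟩ := Finset.exists_min_image Finset.univ v ⟨i0, Finset.mem_univ _⟩
  obtain ⟨i1, c1, c1', hcc1⟩ := GDAux.exists_two_edges G hm hp v hvpos hv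
  have hsepex : ∀ (i' : Fin p) (c c' : Σ j, Fin (G.a i' j)), c ≠ c' →
      ∃ d : ℝ, 0 < d ∧ ∀ x ∈ G.S i' c.1 c.2 '' G.K c.1,
        ∀ y ∈ G.S i' c'.1 c'.2 '' G.K c'.1, d ≤ dist x y :=
    fun i' c c' h => GDAux.exists_sep G hr0 i' c c' h
  let dfun : (Σ i' : Fin p, (Σ j, Fin (G.a i' j)) × (Σ j, Fin (G.a i' j))) → ℝ :=
    fun q => if h : q.2.1 ≠ q.2.2 then (hsepex q.1 q.2.1 q.2.2 h).choose else 1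
  let PF : Finset (Σ i' : Fin p, (Σ j, Fin (G.a i' j)) × (Σ j, Fin (G.a i' j))) :=
    Finset.univ.filter (fun q => q.2.1 ≠ q.2.2)
  have hPFne : PF.Nonempty := ⟨⟨i1, (c1, c1')⟩, by simp [PF, hcc1]⟩
  set δ := PF.inf' hPFne dfun with hδdef
  have hδ : 0 < δ := by
    rw [hδdef, Finset.lt_inf'_iff]
    intro q hq
    rw [Finset.mem_filter] at hq
    have h := hq.2
    simp only [dfun, dif_pos h]
    exact (hsepex q.1 q.2.1 q.2.2 h).choose_spec.1
  have hsep : ∀ (i' : Fin p) (c c' : Σ j, Fin (G.a i' j)), c ≠ c' →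
      ∀ x ∈ G.S i' c.1 c.2 '' G.K c.1, ∀ y ∈ G.S i' c'.1 c'.2 '' G.K c'.1,
        δ ≤ dist x y := by
    intro i' c c' h x hx y hy
    have hmem : (⟨i', (c, c')⟩ :
        Σ i' : Fin p, (Σ j, Fin (G.a i' j)) × (Σ j, Fin (G.a i' j))) ∈ PF := by
      simp [PF, h]
    have hle : δ ≤ dfun ⟨i', (c, c')⟩ := Finset.inf'_le _ hmem
    have h2 : dfun ⟨i', (c, c')⟩ ≤ dist x y := by
      simp only [dfun, dif_pos (show (⟨i', (c, c')⟩ :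
        Σ i' : Fin p, (Σ j, Fin (G.a i' j)) × (Σ j, Fin (G.a i' j))).2.1 ≠
          (⟨i', (c, c')⟩ : Σ i' : Fin p,
            (Σ j, Fin (G.a i' j)) × (Σ j, Fin (G.a i' j))).2.2 from h)]
      exact (hsepex i' c c' h).choose_spec.2 x hx y hy
    linarith
  have hlow := GDAux.lower_bound G hδ hsep hr0 hr1 v hm hv hvpos (v imax) (hvpos imax)
    (fun j => hmax j (Finset.mem_univ _)) hs0 hrs i0
  have hup := GDAux.upper_bound G hr0 hr1 v hm hv hvpos (v imin) (hvpos imin)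
    (fun j => hmin j (Finset.mem_univ _)) hs0 hrs i0
  have hpos : 0 < μH[s] (G.K i0) := by
    refine lt_of_lt_of_le (ENNReal.ofReal_pos.2 ?_) hlow
    have h1 := hvpos i0
    have h2 := Real.rpow_pos_of_pos hδ s
    have h3 := hvpos imax
    positivity
  have htop : μH[s] (G.K i0) < ⊤ := lt_of_le_of_lt hup ENNReal.ofReal_lt_top
  refine ⟨?_, hpos, htop⟩
  have hcoe : ((s.toNNReal : ℝ≥0) : ℝ) = s := Real.coe_toNNReal s hs0.le
  have h1 : μH[((s.toNNReal : ℝ≥0) : ℝ)] (G.K i0) ≠ 0 := by rw [hcoe]; exact hpos.ne'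
  have h2 : μH[((s.toNNReal : ℝ≥0) : ℝ)] (G.K i0) ≠ ⊤ := by rw [hcoe]; exact htop.ne
  have hdim := dimH_of_hausdorffMeasure_ne_zero_ne_top h1 h2
  rw [hdim]
  rfl
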